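/- Let ⊢ be a non-permeable, monotonic, regular and compact consequence relation on a sentential language. Then the least cardinality of a set V of truth values over which ⊢ has a truth-adequate mixed semantics is: exactly 2 if and only if ⊢ is reflexive and transitive; exactly 3 if and only if ⊢ is reflexive or transitive but not both; and exactly 4 if and only if ⊢ is neither reflexive nor transitive. -/

import Mathlib

universe u v w x

/-- Mixed truth-relation. -/
def Mixed {V : Type*} (Dp Dc : Set V) (γ δ : Set V) : Prop :=
  γ ⊆ Dp → (δ ∩ Dc).Nonempty

def Monotonic {L : Type*} (Cons : Set L → Set L → Prop) : Prop :=
  ∀ ⦃Γ₁ Γ₂ Δ₁ Δ₂ : Set L⦄, Γ₁ ⊆ Γ₂ → Δ₁ ⊆ Δ₂ → Cons Γ₁ Δ₁ → Cons Γ₂ Δ₂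

def ReflRel {L : Type*} (Cons : Set L → Set L → Prop) : Prop :=
  ∀ F : L, Cons {F} {F}

def TransRel {L : Type*} (Cons : Set L → Set L → Prop) : Prop :=
  ∀ Γ Δ : Set L, ¬ Cons Γ Δ →
    ∃ Γ' Δ' : Set L, Γ ⊆ Γ' ∧ Δ ⊆ Δ' ∧ ¬ Cons Γ' Δ' ∧ Γ' ∪ Δ' = Set.univ

def LRPermeable {L : Type*} (Cons : Set L → Set L → Prop) : Prop :=
  ∀ Γ Δ S : Set L, Cons (Γ ∪ S) Δ → Cons Γ (S ∪ Δ)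

def RLPermeable {L : Type*} (Cons : Set L → Set L → Prop) : Prop :=
  ∀ Γ Δ S : Set L, Cons Γ (S ∪ Δ) → Cons (Γ ∪ S) Δ

def Permeable {L : Type*} (Cons : Set L → Set L → Prop) : Prop :=
  LRPermeable Cons ∨ RLPermeable Cons

def CompactRel {L : Type*} (Cons : Set L → Set L → Prop) : Prop :=
  ∀ Γ Δ : Set L, Cons Γ Δ →
    ∃ Γ' Δ' : Set L, Γ' ⊆ Γ ∧ Δ' ⊆ Δ ∧ Γ'.Finite ∧ Δ'.Finite ∧ Cons Γ' Δ'

/-- Sound and complete intersective mixed semantics. -/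
def IsIMS {L V W Λ : Type*} (Cons : Set L → Set L → Prop)
    (interp : L → W → V) (Dp Dc : Λ → Set V) : Prop :=
  ∀ Γ Δ : Set L, Cons Γ Δ ↔
    ∀ (w : W) (l : Λ), Mixed (Dp l) (Dc l)
      ((fun F => interp F w) '' Γ) ((fun F => interp F w) '' Δ)

/-- Sound and complete mixed semantics (single pair). -/
def IsMixedSem {L V W : Type*} (Cons : Set L → Set L → Prop)
    (interp : L → W → V) (Dp Dc : Set V) : Prop :=
  ∀ Γ Δ : Set L, Cons Γ Δ ↔
    ∀ w : W, Mixed Dp Dc ((fun F => interp F w) '' Γ) ((fun F => interp F w) '' Δ)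

/-- Formulae of a sentential language. -/
inductive Formula (A : Type u) (C : Type u) (ar : C → ℕ) : Type u
  | atom : A → Formula A C ar
  | conn : (c : C) → (Fin (ar c) → Formula A C ar) → Formula A C ar

/-- Substitution induced by a map from atoms to formulae. -/
def Formula.subst {A C : Type u} {ar : C → ℕ} (σ : A → Formula A C ar) :
    Formula A C ar → Formula A C ar
  | .atom a => σ a
  | .conn c Fs => .conn c (fun i => (Fs i).subst σ)

def SubstInvariant {A C : Type u} {ar : C → ℕ}
    (Cons : Set (Formula A C ar) → Set (Formula A C ar) → Prop) : Prop :=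
  ∀ (σ : A → Formula A C ar) (Γ Δ : Set (Formula A C ar)),
    Cons Γ Δ → Cons (Formula.subst σ '' Γ) (Formula.subst σ '' Δ)

/-- Evaluation of formulae from truth-functions and a valuation. -/
def evalF {A C : Type u} {ar : C → ℕ} {V : Type v}
    (tf : (c : C) → (Fin (ar c) → V) → V) (v : A → V) : Formula A C ar → V
  | .atom a => v a
  | .conn c Fs => tf c (fun i => evalF tf v (Fs i))

/-- Truth-functionality of an interpretation w.r.t. truth-functions. -/
def Compositional {A C : Type u} {ar : C → ℕ} {V : Type v} {W : Type w}
    (interp : Formula A C ar → W → V)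
    (tf : (c : C) → (Fin (ar c) → V) → V) : Prop :=
  ∀ (c : C) (Fs : Fin (ar c) → Formula A C ar) (w : W),
    interp (Formula.conn c Fs) w = tf c (fun i => interp (Fs i) w)

/-- Regular connectives. -/
def RegularRel {A C : Type u} {ar : C → ℕ}
    (Cons : Set (Formula A C ar) → Set (Formula A C ar) → Prop) : Prop :=
  ∀ c : C, ∃ Bp Bc : Set (Set (Fin (ar c)) × Set (Fin (ar c))),
    ∀ (Γ Δ : Set (Formula A C ar)) (Fs : Fin (ar c) → Formula A C ar),
      (Cons (Γ ∪ {Formula.conn c Fs}) Δ ↔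
        ∀ B ∈ Bp, Cons (Γ ∪ Fs '' B.1) (Fs '' B.2 ∪ Δ)) ∧
      (Cons Γ ({Formula.conn c Fs} ∪ Δ) ↔
        ∀ B ∈ Bc, Cons (Γ ∪ Fs '' B.1) (Fs '' B.2 ∪ Δ))

/-- `Cons` has a truth-adequate mixed semantics over a set of at most `n`
truth values. -/
def HasTAMixedCard {A C : Type u} {ar : C → ℕ}
    (Cons : Set (Formula A C ar) → Set (Formula A C ar) → Prop) (n : ℕ) : Prop :=
  ∃ (V : Type) (_ : Fintype V), Fintype.card V ≤ n ∧
    ∃ (W : Type u) (interp : Formula A C ar → W → V)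
      (tf : (c : C) → (Fin (ar c) → V) → V) (Dp Dc : Set V),
      IsMixedSem Cons interp Dp Dc ∧ Compositional interp tf

section Helpers18

open Classical

/-- If the premise- and conclusion-designated sets are disjoint, the relation is
right-to-left permeable. -/
lemma rl_of_disjoint {L V W : Type*} {Cons : Set L → Set L → Prop}
    {interp : L → W → V} {Dp Dc : Set V}
    (hsem : IsMixedSem Cons interp Dp Dc)
    (hd : ∀ x, x ∈ Dp → x ∈ Dc → False) : RLPermeable Cons := by
  intro Γ Δ S h
  rw [hsem] at h ⊢
  intro w hsub
  rw [Set.image_union] at hsub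
  obtain ⟨x, hx, hxc⟩ := h w (fun y hy => hsub (Set.mem_union_left _ hy))
  rw [Set.image_union] at hx
  rcases hx with hx | hx
  · exact absurd (hd x (hsub (Set.mem_union_right _ hx)) hxc) (fun h => h)
  · exact ⟨x, hx, hxc⟩

/-- If the premise- and conclusion-designated sets cover all truth values, the
relation is left-to-right permeable. -/
lemma lr_of_cover {L V W : Type*} {Cons : Set L → Set L → Prop}
    {interp : L → W → V} {Dp Dc : Set V}
    (hsem : IsMixedSem Cons interp Dp Dc)
    (hc : ∀ x, x ∈ Dp ∨ x ∈ Dc) : LRPermeable Cons := by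
  intro Γ Δ S h
  rw [hsem] at h ⊢
  intro w hΓ
  rw [Set.image_union]
  by_cases hS : (fun F => interp F w) '' S ⊆ Dp
  · obtain ⟨x, hx, hxc⟩ := h w (by rw [Set.image_union]; exact Set.union_subset hΓ hS)
    exact ⟨x, Set.mem_union_right _ hx, hxc⟩
  · obtain ⟨x, hx, hxp⟩ := Set.not_subset.mp hS
    rcases hc x with h' | h'
    · exact absurd h' hxp
    · exact ⟨x, Set.mem_union_left _ hx, h'⟩

/-- From a failed consequence, extract a counterexample world together with the
canonical extension pair it defines. -/
lemma cex_world {L V W : Type*} {Cons : Set L → Set L → Prop}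
    {interp : L → W → V} {Dp Dc : Set V}
    (hsem : IsMixedSem Cons interp Dp Dc) {Γ Δ : Set L} (h : ¬ Cons Γ Δ) :
    ∃ w : W, Γ ⊆ {F | interp F w ∈ Dp} ∧ Δ ⊆ {F | interp F w ∉ Dc} ∧
      ¬ Cons {F | interp F w ∈ Dp} {F | interp F w ∉ Dc} := by
  rw [hsem] at h
  push_neg at h
  obtain ⟨w, hw⟩ := h
  rw [Mixed] at hw
  push_neg at hw
  obtain ⟨hsub, hemp⟩ := hw
  have hΓ : Γ ⊆ {F | interp F w ∈ Dp} := fun F hF => hsub ⟨F, hF, rfl⟩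
  have hΔ : Δ ⊆ {F | interp F w ∉ Dc} := by
    intro F hF hFc
    exact (Set.not_nonempty_iff_eq_empty.mpr hemp) ⟨interp F w, ⟨F, hF, rfl⟩, hFc⟩
  refine ⟨w, hΓ, hΔ, ?_⟩
  intro hcons
  rw [hsem] at hcons
  obtain ⟨x, ⟨F, hF, rfl⟩, hxc⟩ := hcons w (by rintro x ⟨F, hF, rfl⟩; exact hF)
  exact hF hxc

/-- Under non-permeability, any mixed semantics has a value in `Dp ∩ Dc` and a
value outside `Dp ∪ Dc`. -/
lemma pts_of_sem {L V W : Type*} {Cons : Set L → Set L → Prop}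
    {interp : L → W → V} {Dp Dc : Set V}
    (hsem : IsMixedSem Cons interp Dp Dc) (hnp : ¬ Permeable Cons) :
    (∃ t, t ∈ Dp ∧ t ∈ Dc) ∧ (∃ z, z ∉ Dp ∧ z ∉ Dc) := by
  constructor
  · by_contra h
    push_neg at h
    exact hnp (Or.inr (rl_of_disjoint hsem (fun x hx hc => h x hx hc)))
  · by_contra h
    push_neg at h
    exact hnp (Or.inl (lr_of_cover hsem (fun x => by
      by_cases hx : x ∈ Dp
      · exact Or.inl hx
      · exact Or.inr (h x hx))))

lemma three_le_card {V : Type*} [Fintype V] {a b c : V}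
    (hab : a ≠ b) (hac : a ≠ c) (hbc : b ≠ c) : 3 ≤ Fintype.card V := by
  classical
  have h : ({a, b, c} : Finset V).card = 3 := by
    rw [Finset.card_insert_of_notMem (by simp [hab, hac]),
      Finset.card_insert_of_notMem (by simp [hbc]), Finset.card_singleton]
  calc 3 = ({a, b, c} : Finset V).card := h.symm
    _ ≤ Fintype.card V := Finset.card_le_univ _

lemma four_le_card {V : Type*} [Fintype V] {a b c d : V}
    (hab : a ≠ b) (hac : a ≠ c) (had : a ≠ d) (hbc : b ≠ c) (hbd : b ≠ d)
    (hcd : c ≠ d) : 4 ≤ Fintype.card V := by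
  classical
  have h : ({a, b, c, d} : Finset V).card = 4 := by
    rw [Finset.card_insert_of_notMem (by simp [hab, hac, had]),
      Finset.card_insert_of_notMem (by simp [hbc, hbd]),
      Finset.card_insert_of_notMem (by simp [hcd]), Finset.card_singleton]
  calc 4 = ({a, b, c, d} : Finset V).card := h.symm
    _ ≤ Fintype.card V := Finset.card_le_univ _

end Helpers18
section Helpers18b

open Classical

variable {A C : Type u} {ar : C → ℕ}
variable {Cons : Set (Formula A C ar) → Set (Formula A C ar) → Prop}

lemma not_H1 (hnp : ¬ Permeable Cons) : ¬ HasTAMixedCard Cons 1 := by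
  rintro ⟨V, _, hcard, W, interp, tf, Dp, Dc, hsem, -⟩
  obtain ⟨⟨t, htp, htc⟩, ⟨z, hzp, hzc⟩⟩ := pts_of_sem hsem hnp
  have htz : t ≠ z := fun h => hzp (h ▸ htp)
  have : 2 ≤ Fintype.card V := Fintype.one_lt_card_iff.mpr ⟨t, z, htz⟩
  omega

lemma H2_to_RT (hnp : ¬ Permeable Cons)
    (h : HasTAMixedCard Cons 2) : ReflRel Cons ∧ TransRel Cons := by
  obtain ⟨V, _, hcard, W, interp, tf, Dp, Dc, hsem, -⟩ := h
  obtain ⟨⟨t, htp, htc⟩, ⟨z, hzp, hzc⟩⟩ := pts_of_sem hsem hnp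
  have htz : t ≠ z := fun h => hzp (h ▸ htp)
  have hall : ∀ v : V, v = t ∨ v = z := by
    intro v
    by_contra hv
    push_neg at hv
    exact absurd (three_le_card hv.1 hv.2 htz) (by omega)
  have hDp : ∀ v : V, v ∈ Dp ↔ v = t := by
    intro v
    constructor
    · intro hv
      rcases hall v with rfl | rfl
      · rfl
      · exact absurd hv hzp
    · rintro rfl; exact htp
  have hDc : ∀ v : V, v ∈ Dc ↔ v = t := by
    intro v
    constructor
    · intro hv
      rcases hall v with rfl | rfl
      · rfl
      · exact absurd hv hzc
    · rintro rfl; exact htc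
  constructor
  · intro F
    rw [hsem]
    intro w
    rw [Set.image_singleton]
    intro hsub
    exact ⟨interp F w, rfl, (hDc _).mpr ((hDp _).mp (hsub rfl))⟩
  · intro Γ Δ h
    obtain ⟨w, hΓ, hΔ, hnc⟩ := cex_world hsem h
    refine ⟨{F | interp F w ∈ Dp}, {F | interp F w ∉ Dc}, hΓ, hΔ, hnc, ?_⟩
    ext F
    simp only [Set.mem_union, Set.mem_setOf_eq, Set.mem_univ, iff_true]
    by_cases hF : interp F w ∈ Dp
    · exact Or.inl hF
    · refine Or.inr (fun hc => hF ?_)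
      exact (hDp _).mpr ((hDc _).mp hc)

lemma nR_nT_notH3 (hnp : ¬ Permeable Cons) (hnr : ¬ ReflRel Cons)
    (hnt : ¬ TransRel Cons) : ¬ HasTAMixedCard Cons 3 := by
  rintro ⟨V, _, hcard, W, interp, tf, Dp, Dc, hsem, -⟩
  obtain ⟨⟨t, htp, htc⟩, ⟨z, hzp, hzc⟩⟩ := pts_of_sem hsem hnp
  -- a realized value in Dp \ Dc from failure of reflexivity
  rw [ReflRel] at hnr
  push_neg at hnr
  obtain ⟨F₀, hF₀⟩ := hnr
  obtain ⟨w₀, hΓ₀, hΔ₀, -⟩ := cex_world hsem hF₀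
  have hx : interp F₀ w₀ ∈ Dp ∧ interp F₀ w₀ ∉ Dc :=
    ⟨hΓ₀ rfl, hΔ₀ rfl⟩
  set x := interp F₀ w₀ with hxdef
  -- a realized value in Dc \ Dp from failure of transitivity
  rw [TransRel] at hnt
  push_neg at hnt
  obtain ⟨Γ, Δ, hncons, hmax⟩ := hnt
  obtain ⟨w₁, hΓ₁, hΔ₁, hnc₁⟩ := cex_world hsem hncons
  have hne : {F | interp F w₁ ∈ Dp} ∪ {F | interp F w₁ ∉ Dc} ≠ Set.univ :=
    hmax _ _ hΓ₁ hΔ₁ hnc₁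
  obtain ⟨F₁, hF₁⟩ := Set.ne_univ_iff_exists_notMem _ |>.mp hne
  simp only [Set.mem_union, Set.mem_setOf_eq, not_or, not_not] at hF₁
  set y := interp F₁ w₁ with hydef
  have hy : y ∉ Dp ∧ y ∈ Dc := hF₁
  -- four distinct values
  have h4 : 4 ≤ Fintype.card V := by
    refine four_le_card (a := t) (b := z) (c := x) (d := y) ?_ ?_ ?_ ?_ ?_ ?_
    · exact fun h => hzp (h ▸ htp)
    · exact fun h => hx.2 (h ▸ htc)
    · exact fun h => hy.1 (h ▸ htp)
    · exact fun h => hzp (h.symm ▸ hx.1)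
    · exact fun h => hzc (h.symm ▸ hy.2)
    · exact fun h => hy.1 (h ▸ hx.1)
  omega

end Helpers18b
section Helpers18c

open Classical

private lemma chain_finite_subset {α : Type*} {c : Set (Set α)}
    (hc : IsChain (· ⊆ ·) c) (hne : c.Nonempty) {f : Set α} (hf : f.Finite) :
    f ⊆ ⋃₀ c → ∃ t ∈ c, f ⊆ t := by
  refine Set.Finite.induction_on (motive := fun s _ => s ⊆ ⋃₀ c → ∃ t ∈ c, s ⊆ t) f hf ?_ ?_
  · exact fun _ => ⟨hne.choose, hne.choose_spec, by simp⟩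
  · intro a s ha hs ih hsub
    obtain ⟨t₁, ht₁, hft₁⟩ := ih (fun x hx => hsub (Set.mem_insert_of_mem _ hx))
    obtain ⟨t₂, ht₂, hat₂⟩ := hsub (Set.mem_insert _ _)
    rcases eq_or_ne t₁ t₂ with rfl | hne'
    · exact ⟨t₁, ht₁, Set.insert_subset hat₂ hft₁⟩
    rcases hc ht₁ ht₂ hne' with h | h
    · exact ⟨t₂, ht₂, Set.insert_subset hat₂ (hft₁.trans h)⟩
    · exact ⟨t₁, ht₁, Set.insert_subset (h hat₂) hft₁⟩

variable {L : Type u} {Cons : Set L → Set L → Prop}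

/-- A maximal counterexample pair. -/
def MaxPair (Cons : Set L → Set L → Prop) (p : Set L × Set L) : Prop :=
  ¬ Cons p.1 p.2 ∧ (∀ F ∉ p.1, Cons (p.1 ∪ {F}) p.2) ∧
    (∀ F ∉ p.2, Cons p.1 ({F} ∪ p.2))

lemma exists_maxpair (hmono : Monotonic Cons) (hcomp : CompactRel Cons)
    {Γ Δ : Set L} (h : ¬ Cons Γ Δ) :
    ∃ p : Set L × Set L, Γ ⊆ p.1 ∧ Δ ⊆ p.2 ∧ MaxPair Cons p := by
  set S : Set (Set (L ⊕ L)) :=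
    {s | ¬ Cons (Sum.inl ⁻¹' s) (Sum.inr ⁻¹' s)} with hS
  have hx₀ : (Sum.inl '' Γ ∪ Sum.inr '' Δ) ∈ S := by
    have h1 : Sum.inl ⁻¹' (Sum.inl '' Γ ∪ Sum.inr '' Δ) = Γ := by ext x; simp
    have h2 : Sum.inr ⁻¹' (Sum.inl '' Γ ∪ Sum.inr '' Δ) = Δ := by ext x; simp
    simpa [hS, h1, h2] using h
  have hub : ∀ c ⊆ S, IsChain (· ⊆ ·) c → c.Nonempty → ∃ ub ∈ S, ∀ s ∈ c, s ⊆ ub := by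
    intro c hcS hchain hcne
    refine ⟨⋃₀ c, ?_, fun s hs => Set.subset_sUnion_of_mem hs⟩
    intro hcons
    obtain ⟨Γ', Δ', hΓ'sub, hΔ'sub, hΓ'fin, hΔ'fin, hcons'⟩ := hcomp _ _ hcons
    have hfin : (Sum.inl '' Γ' ∪ Sum.inr '' Δ' : Set (L ⊕ L)).Finite :=
      (hΓ'fin.image _).union (hΔ'fin.image _)
    have hsub : (Sum.inl '' Γ' ∪ Sum.inr '' Δ' : Set (L ⊕ L)) ⊆ ⋃₀ c := by
      rintro x (⟨F, hF, rfl⟩ | ⟨F, hF, rfl⟩)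
      · exact hΓ'sub hF
      · exact hΔ'sub hF
    obtain ⟨t, htc, hft⟩ := chain_finite_subset hchain hcne hfin hsub
    refine hcS htc ?_
    refine hmono (Γ₁ := Γ') (Δ₁ := Δ') ?_ ?_ hcons'
    · intro F hF
      exact hft (Set.mem_union_left _ ⟨F, hF, rfl⟩)
    · intro F hF
      exact hft (Set.mem_union_right _ ⟨F, hF, rfl⟩)
  obtain ⟨m, hxm, hmem, hmax⟩ := zorn_subset_nonempty S hub _ hx₀
  refine ⟨(Sum.inl ⁻¹' m, Sum.inr ⁻¹' m), ?_, ?_, hmem, ?_, ?_⟩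
  · intro F hF
    exact hxm (Set.mem_union_left _ ⟨F, hF, rfl⟩)
  · intro F hF
    exact hxm (Set.mem_union_right _ ⟨F, hF, rfl⟩)
  · intro F hF
    by_contra hcons
    have e1 : Sum.inl ⁻¹' (insert (Sum.inl F) m) = (Sum.inl ⁻¹' m) ∪ {F} := by
      ext x; simp [Set.mem_insert_iff, or_comm]
    have e2 : Sum.inr ⁻¹' (insert (Sum.inl F) m) = Sum.inr ⁻¹' m := by
      ext x; simp [Set.mem_insert_iff]
    have hm' : insert (Sum.inl F) m ∈ S := by
      simpa [hS, e1, e2] using hcons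
    have := hmax hm' (Set.subset_insert _ _) (Set.mem_insert _ _)
    exact hF this
  · intro F hF
    by_contra hcons
    have e1 : Sum.inl ⁻¹' (insert (Sum.inr F) m) = Sum.inl ⁻¹' m := by
      ext x; simp [Set.mem_insert_iff]
    have e2 : Sum.inr ⁻¹' (insert (Sum.inr F) m) = {F} ∪ (Sum.inr ⁻¹' m) := by
      ext x; simp [Set.mem_insert_iff]
    have hm' : insert (Sum.inr F) m ∈ S := by
      simpa [hS, e1, e2] using hcons
    have := hmax hm' (Set.subset_insert _ _) (Set.mem_insert _ _)
    exact hF this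

end Helpers18c
section Master18

open Classical

variable {A C : Type u} {ar : C → ℕ}

/-- Boolean value pair of a formula relative to a pair of sets of formulae. -/
noncomputable def bval (p : Set (Formula A C ar) × Set (Formula A C ar))
    (F : Formula A C ar) : Bool × Bool :=
  (if F ∈ p.1 then true else false, if F ∈ p.2 then true else false)

lemma bval_fst {p : Set (Formula A C ar) × Set (Formula A C ar)}
    {F : Formula A C ar} : (bval p F).1 = true ↔ F ∈ p.1 := by
  by_cases h : F ∈ p.1 <;> simp [bval, h]

lemma bval_snd {p : Set (Formula A C ar) × Set (Formula A C ar)}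
    {F : Formula A C ar} : (bval p F).2 = true ↔ F ∈ p.2 := by
  by_cases h : F ∈ p.2 <;> simp [bval, h]

lemma bval_snd_false {p : Set (Formula A C ar) × Set (Formula A C ar)}
    {F : Formula A C ar} : (bval p F).2 = false ↔ F ∉ p.2 := by
  by_cases h : F ∈ p.2 <;> simp [bval, h]

/-- Raw truth-function determined by regularity data. -/
noncomputable def rawTF (Bp Bc : (c : C) → Set (Set (Fin (ar c)) × Set (Fin (ar c))))
    (c : C) (v : Fin (ar c) → Bool × Bool) : Bool × Bool :=
  (if (∀ B ∈ Bp c, ¬((∀ i ∈ B.1, (v i).1 = true) ∧ (∀ i ∈ B.2, (v i).2 = true)))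
      then false else true,
   if (∀ B ∈ Bc c, ¬((∀ i ∈ B.1, (v i).1 = true) ∧ (∀ i ∈ B.2, (v i).2 = true)))
      then false else true)

lemma rawTF_fst (Bp Bc : (c : C) → Set (Set (Fin (ar c)) × Set (Fin (ar c))))
    (c : C) (v : Fin (ar c) → Bool × Bool) :
    (rawTF Bp Bc c v).1 =
      if (∀ B ∈ Bp c, ¬((∀ i ∈ B.1, (v i).1 = true) ∧ (∀ i ∈ B.2, (v i).2 = true)))
        then false else true := by rw [rawTF]

lemma rawTF_snd (Bp Bc : (c : C) → Set (Set (Fin (ar c)) × Set (Fin (ar c))))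
    (c : C) (v : Fin (ar c) → Bool × Bool) :
    (rawTF Bp Bc c v).2 =
      if (∀ B ∈ Bc c, ¬((∀ i ∈ B.1, (v i).1 = true) ∧ (∀ i ∈ B.2, (v i).2 = true)))
        then false else true := by rw [rawTF]

lemma bval_fst_eq (p : Set (Formula A C ar) × Set (Formula A C ar))
    (F : Formula A C ar) :
    (bval p F).1 = if F ∈ p.1 then true else false := by rw [bval]

lemma bval_snd_eq (p : Set (Formula A C ar) × Set (Formula A C ar))
    (F : Formula A C ar) :
    (bval p F).2 = if F ∈ p.2 then true else false := by rw [bval]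

variable {Cons : Set (Formula A C ar) → Set (Formula A C ar) → Prop}

/-- The master canonical-model construction: from a family of "good" pairs
(maximal counterexamples) one obtains a truth-adequate mixed semantics with
values in any set `SV` of boolean pairs containing all realized values. -/
lemma master (hmono : Monotonic Cons) (hreg : RegularRel Cons)
    (Good : Set (Formula A C ar) × Set (Formula A C ar) → Prop)
    (SV : Set (Bool × Bool)) (v₀ : Bool × Bool) (hv₀ : v₀ ∈ SV)
    (hN : ∀ p, Good p → ¬ Cons p.1 p.2)
    (hGL : ∀ p, Good p → ∀ F ∉ p.1, Cons (p.1 ∪ {F}) p.2)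
    (hGR : ∀ p, Good p → ∀ F ∉ p.2, Cons p.1 ({F} ∪ p.2))
    (hExt : ∀ Γ Δ, ¬ Cons Γ Δ → ∃ p, Good p ∧ Γ ⊆ p.1 ∧ Δ ⊆ p.2)
    (hSV : ∀ p, Good p → ∀ F, bval p F ∈ SV) :
    ∃ (interp : Formula A C ar → {p // Good p} → {v // v ∈ SV})
      (tf : (c : C) → (Fin (ar c) → {v // v ∈ SV}) → {v // v ∈ SV}),
      IsMixedSem Cons interp {v | v.1.1 = true} {v | v.1.2 = false} ∧
      Compositional interp tf := by
  choose Bp Bc hB using hreg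
  have hkey : ∀ (p : Set (Formula A C ar) × Set (Formula A C ar)), Good p →
      ∀ (c : C) (Fs : Fin (ar c) → Formula A C ar),
      bval p (Formula.conn c Fs) = rawTF Bp Bc c (fun i => bval p (Fs i)) := by
    intro p hp c Fs
    have hconj : ∀ B : Set (Fin (ar c)) × Set (Fin (ar c)),
        Cons (p.1 ∪ Fs '' B.1) (Fs '' B.2 ∪ p.2) ↔
          ¬((∀ i ∈ B.1, Fs i ∈ p.1) ∧ (∀ i ∈ B.2, Fs i ∈ p.2)) := by
      intro B
      constructor
      · rintro hc ⟨h1, h2⟩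
        have e1 : p.1 ∪ Fs '' B.1 = p.1 :=
          Set.union_eq_left.mpr (by rintro y ⟨i, hi, rfl⟩; exact h1 i hi)
        have e2 : Fs '' B.2 ∪ p.2 = p.2 :=
          Set.union_eq_right.mpr (by rintro y ⟨i, hi, rfl⟩; exact h2 i hi)
        rw [e1, e2] at hc
        exact hN p hp hc
      · intro hn
        rcases not_and_or.mp hn with h1 | h2
        · push_neg at h1
          obtain ⟨i, hi, hip⟩ := h1
          refine hmono ?_ Set.subset_union_right (hGL p hp _ hip)
          exact Set.union_subset_union_right _
            (Set.singleton_subset_iff.mpr ⟨i, hi, rfl⟩)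
        · push_neg at h2
          obtain ⟨i, hi, hip⟩ := h2
          refine hmono Set.subset_union_left ?_ (hGR p hp _ hip)
          exact Set.union_subset_union_left _
            (Set.singleton_subset_iff.mpr ⟨i, hi, rfl⟩)
    have hmemL : Formula.conn c Fs ∈ p.1 ↔
        ¬(∀ B ∈ Bp c, ¬((∀ i ∈ B.1, Fs i ∈ p.1) ∧ (∀ i ∈ B.2, Fs i ∈ p.2))) := by
      have h1 := (hB c p.1 p.2 Fs).1
      constructor
      · intro hmem hφ
        have hc : Cons (p.1 ∪ {Formula.conn c Fs}) p.2 :=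
          h1.mpr (fun B hB' => (hconj B).mpr (hφ B hB'))
        rw [Set.union_eq_left.mpr (Set.singleton_subset_iff.mpr hmem)] at hc
        exact hN p hp hc
      · intro hφ
        by_contra hmem
        exact hφ (fun B hB' => (hconj B).mp (h1.mp (hGL p hp _ hmem) B hB'))
    have hmemR : Formula.conn c Fs ∈ p.2 ↔
        ¬(∀ B ∈ Bc c, ¬((∀ i ∈ B.1, Fs i ∈ p.1) ∧ (∀ i ∈ B.2, Fs i ∈ p.2))) := by
      have h2 := (hB c p.1 p.2 Fs).2
      constructor
      · intro hmem hψ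
        have hc : Cons p.1 ({Formula.conn c Fs} ∪ p.2) :=
          h2.mpr (fun B hB' => (hconj B).mpr (hψ B hB'))
        rw [Set.union_eq_right.mpr (Set.singleton_subset_iff.mpr hmem)] at hc
        exact hN p hp hc
      · intro hψ
        by_contra hmem
        exact hψ (fun B hB' => (hconj B).mp (h2.mp (hGR p hp _ hmem) B hB'))
    have hφiff : (∀ B ∈ Bp c, ¬((∀ i ∈ B.1, (bval p (Fs i)).1 = true) ∧
          (∀ i ∈ B.2, (bval p (Fs i)).2 = true))) ↔
        (∀ B ∈ Bp c, ¬((∀ i ∈ B.1, Fs i ∈ p.1) ∧ (∀ i ∈ B.2, Fs i ∈ p.2))) := by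
      simp only [bval_fst, bval_snd]
    have hψiff : (∀ B ∈ Bc c, ¬((∀ i ∈ B.1, (bval p (Fs i)).1 = true) ∧
          (∀ i ∈ B.2, (bval p (Fs i)).2 = true))) ↔
        (∀ B ∈ Bc c, ¬((∀ i ∈ B.1, Fs i ∈ p.1) ∧ (∀ i ∈ B.2, Fs i ∈ p.2))) := by
      simp only [bval_fst, bval_snd]
    have c1 : (bval p (Formula.conn c Fs)).1 =
        (rawTF Bp Bc c (fun i => bval p (Fs i))).1 := by
      rw [bval_fst_eq, rawTF_fst]
      by_cases hφ : (∀ B ∈ Bp c, ¬((∀ i ∈ B.1, Fs i ∈ p.1) ∧ (∀ i ∈ B.2, Fs i ∈ p.2)))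
      · rw [if_neg (fun hmem => (hmemL.mp hmem) hφ), if_pos (hφiff.mpr hφ)]
      · rw [if_pos (hmemL.mpr hφ), if_neg (fun h => hφ (hφiff.mp h))]
    have c2 : (bval p (Formula.conn c Fs)).2 =
        (rawTF Bp Bc c (fun i => bval p (Fs i))).2 := by
      rw [bval_snd_eq, rawTF_snd]
      by_cases hψ : (∀ B ∈ Bc c, ¬((∀ i ∈ B.1, Fs i ∈ p.1) ∧ (∀ i ∈ B.2, Fs i ∈ p.2)))
      · rw [if_neg (fun hmem => (hmemR.mp hmem) hψ), if_pos (hψiff.mpr hψ)]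
      · rw [if_pos (hmemR.mpr hψ), if_neg (fun h => hψ (hψiff.mp h))]
    exact Prod.ext c1 c2
  refine ⟨fun F w => ⟨bval w.1 F, hSV w.1 w.2 F⟩,
    fun c v => if h : rawTF Bp Bc c (fun i => (v i).1) ∈ SV then ⟨_, h⟩ else ⟨v₀, hv₀⟩,
    ?_, ?_⟩
  · intro Γ Δ
    constructor
    · intro hcons w hsub
      by_contra hempty
      have hΓ : Γ ⊆ w.1.1 := by
        intro F hF
        exact bval_fst.mp (hsub ⟨F, hF, rfl⟩)
      have hΔ : Δ ⊆ w.1.2 := by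
        intro F hF
        by_contra hFm
        exact hempty ⟨_, ⟨F, hF, rfl⟩, bval_snd_false.mpr hFm⟩
      exact hN w.1 w.2 (hmono hΓ hΔ hcons)
    · intro hall
      by_contra hcons
      obtain ⟨p, hp, hΓ, hΔ⟩ := hExt Γ Δ hcons
      obtain ⟨v, ⟨F, hF, rfl⟩, hv⟩ := hall ⟨p, hp⟩
        (by rintro v ⟨F, hF, rfl⟩; exact bval_fst.mpr (hΓ hF))
      exact (bval_snd_false.mp hv) (hΔ hF)
  · intro c Fs w
    have hr := hkey w.1 w.2 c Fs
    have hmem : rawTF Bp Bc c (fun i => bval w.1 (Fs i)) ∈ SV := hr ▸ hSV w.1 w.2 _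
    apply Subtype.ext
    show bval w.1 (Formula.conn c Fs) =
      (if h : (rawTF Bp Bc c fun i => bval w.1 (Fs i)) ∈ SV
        then (⟨rawTF Bp Bc c fun i => bval w.1 (Fs i), h⟩ : {v // v ∈ SV})
        else ⟨v₀, hv₀⟩).1
    rw [dif_pos hmem]
    exact hr

end Master18
section Constructions18

open Classical

lemma card_le_of_inj_fin {α : Type} [Fintype α] {n : ℕ} (f : α → Fin n)
    (hf : Function.Injective f) : Fintype.card α ≤ n := by
  simpa using Fintype.card_le_of_injective f hf

def enc3a : Bool × Bool → Fin 3
  | (false, false) => 0 | (true, false) => 1 | (false, true) => 2 | (true, true) => 0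

def enc3b : Bool × Bool → Fin 3
  | (true, false) => 0 | (false, true) => 1 | (true, true) => 2 | (false, false) => 0

def enc2 : Bool × Bool → Fin 2
  | (true, false) => 0 | (false, true) => 1 | (true, true) => 0 | (false, false) => 0

variable {A C : Type u} {ar : C → ℕ}
variable {Cons : Set (Formula A C ar) → Set (Formula A C ar) → Prop}

lemma H4_always (hmono : Monotonic Cons) (hreg : RegularRel Cons)
    (hcomp : CompactRel Cons) : HasTAMixedCard Cons 4 := by
  obtain ⟨interp, tf, hsem, hcompo⟩ := master hmono hreg (MaxPair Cons)
    (Set.univ : Set (Bool × Bool)) (false, false) (Set.mem_univ _)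
    (fun p hp => hp.1) (fun p hp => hp.2.1) (fun p hp => hp.2.2)
    (fun Γ Δ h => by
      obtain ⟨p, h1, h2, h3⟩ := exists_maxpair hmono hcomp h
      exact ⟨p, h3, h1, h2⟩)
    (fun p _ F => Set.mem_univ _)
  haveI F1 : Fintype {v : Bool × Bool // v ∈ (Set.univ : Set (Bool × Bool))} :=
    Fintype.ofFinite _
  refine ⟨_, F1, ?_, _, interp, tf, _, _, hsem, hcompo⟩
  calc Fintype.card {v : Bool × Bool // v ∈ (Set.univ : Set (Bool × Bool))}
      ≤ Fintype.card (Bool × Bool) :=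
        Fintype.card_le_of_injective _ Subtype.val_injective
    _ = 4 := by simp

lemma H3_of_R (hmono : Monotonic Cons) (hreg : RegularRel Cons)
    (hcomp : CompactRel Cons) (hrefl : ReflRel Cons) : HasTAMixedCard Cons 3 := by
  obtain ⟨interp, tf, hsem, hcompo⟩ := master hmono hreg (MaxPair Cons)
    ({v : Bool × Bool | v ≠ (true, true)}) (false, false) (by simp)
    (fun p hp => hp.1) (fun p hp => hp.2.1) (fun p hp => hp.2.2)
    (fun Γ Δ h => by
      obtain ⟨p, h1, h2, h3⟩ := exists_maxpair hmono hcomp h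
      exact ⟨p, h3, h1, h2⟩)
    (fun p hp F => by
      simp only [Set.mem_setOf_eq]
      intro heq
      have h1 : F ∈ p.1 := bval_fst.mp (by rw [heq])
      have h2 : F ∈ p.2 := bval_snd.mp (by rw [heq])
      exact hp.1 (hmono (Set.singleton_subset_iff.mpr h1)
        (Set.singleton_subset_iff.mpr h2) (hrefl F)))
  haveI F1 : Fintype {v : Bool × Bool // v ∈ {v : Bool × Bool | v ≠ (true, true)}} :=
    Fintype.ofFinite _
  refine ⟨_, F1, ?_, _, interp, tf, _, _, hsem, hcompo⟩
  refine card_le_of_inj_fin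
    (fun v => enc3a v.1) ?_
  rintro ⟨⟨a1, a2⟩, ha⟩ ⟨⟨b1, b2⟩, hb⟩ h
  apply Subtype.ext
  cases a1 <;> cases a2 <;> cases b1 <;> cases b2 <;>
    first
      | rfl
      | exact absurd rfl ha
      | exact absurd rfl hb
      | simp [enc3a, enc3b, enc2] at h

lemma H3_of_T (hmono : Monotonic Cons) (hreg : RegularRel Cons)
    (hcomp : CompactRel Cons) (ht : TransRel Cons) : HasTAMixedCard Cons 3 := by
  obtain ⟨interp, tf, hsem, hcompo⟩ := master hmono hreg
    (fun p => MaxPair Cons p ∧ p.1 ∪ p.2 = Set.univ)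
    ({v : Bool × Bool | v ≠ (false, false)}) (true, true) (by simp)
    (fun p hp => hp.1.1) (fun p hp => hp.1.2.1) (fun p hp => hp.1.2.2)
    (fun Γ Δ h => by
      obtain ⟨Γ₀, Δ₀, hΓ₀, hΔ₀, hnc, huniv⟩ := ht Γ Δ h
      obtain ⟨p, h1, h2, hmp⟩ := exists_maxpair hmono hcomp hnc
      refine ⟨p, ⟨hmp, ?_⟩, hΓ₀.trans h1, hΔ₀.trans h2⟩
      exact Set.univ_subset_iff.mp (huniv ▸ Set.union_subset_union h1 h2))
    (fun p hp F => by
      simp only [Set.mem_setOf_eq]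
      intro heq
      have hor : F ∈ p.1 ∨ F ∈ p.2 := by
        rw [← Set.mem_union, hp.2]; trivial
      rcases hor with h | h
      · have h1 := bval_fst.mpr h
        rw [heq] at h1
        simp at h1
      · have h1 := bval_snd.mpr h
        rw [heq] at h1
        simp at h1)
  haveI F1 : Fintype {v : Bool × Bool // v ∈ {v : Bool × Bool | v ≠ (false, false)}} :=
    Fintype.ofFinite _
  refine ⟨_, F1, ?_, _, interp, tf, _, _, hsem, hcompo⟩
  refine card_le_of_inj_fin
    (fun v => enc3b v.1) ?_
  rintro ⟨⟨a1, a2⟩, ha⟩ ⟨⟨b1, b2⟩, hb⟩ h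
  apply Subtype.ext
  cases a1 <;> cases a2 <;> cases b1 <;> cases b2 <;>
    first
      | rfl
      | exact absurd rfl ha
      | exact absurd rfl hb
      | simp [enc3a, enc3b, enc2] at h

lemma H2_of_RT (hmono : Monotonic Cons) (hreg : RegularRel Cons)
    (hcomp : CompactRel Cons) (hrefl : ReflRel Cons) (ht : TransRel Cons) :
    HasTAMixedCard Cons 2 := by
  obtain ⟨interp, tf, hsem, hcompo⟩ := master hmono hreg
    (fun p => MaxPair Cons p ∧ p.1 ∪ p.2 = Set.univ)
    ({v : Bool × Bool | v.1 ≠ v.2}) (true, false) (by simp)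
    (fun p hp => hp.1.1) (fun p hp => hp.1.2.1) (fun p hp => hp.1.2.2)
    (fun Γ Δ h => by
      obtain ⟨Γ₀, Δ₀, hΓ₀, hΔ₀, hnc, huniv⟩ := ht Γ Δ h
      obtain ⟨p, h1, h2, hmp⟩ := exists_maxpair hmono hcomp hnc
      refine ⟨p, ⟨hmp, ?_⟩, hΓ₀.trans h1, hΔ₀.trans h2⟩
      exact Set.univ_subset_iff.mp (huniv ▸ Set.union_subset_union h1 h2))
    (fun p hp F => by
      simp only [Set.mem_setOf_eq]
      have hor : F ∈ p.1 ∨ F ∈ p.2 := by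
        rw [← Set.mem_union, hp.2]; trivial
      have hnand : ¬(F ∈ p.1 ∧ F ∈ p.2) := by
        rintro ⟨h1, h2⟩
        exact hp.1.1 (hmono (Set.singleton_subset_iff.mpr h1)
          (Set.singleton_subset_iff.mpr h2) (hrefl F))
      intro heq
      rcases hor with h | h
      · have h1 := bval_fst.mpr h
        have h2 : F ∉ p.2 := fun hh => hnand ⟨h, hh⟩
        have h3 := bval_snd_false.mpr h2
        rw [h1, h3] at heq
        exact Bool.noConfusion heq
      · have h1 : F ∉ p.1 := fun hh => hnand ⟨hh, h⟩
        have h2 := bval_snd.mpr h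
        have h3 : (bval p F).1 = false := by
          rw [bval_fst_eq, if_neg h1]
        rw [h2, h3] at heq
        exact Bool.noConfusion heq)
  haveI F1 : Fintype {v : Bool × Bool // v ∈ {v : Bool × Bool | v.1 ≠ v.2}} :=
    Fintype.ofFinite _
  refine ⟨_, F1, ?_, _, interp, tf, _, _, hsem, hcompo⟩
  refine card_le_of_inj_fin
    (fun v => enc2 v.1) ?_
  rintro ⟨⟨a1, a2⟩, ha⟩ ⟨⟨b1, b2⟩, hb⟩ h
  apply Subtype.ext
  cases a1 <;> cases a2 <;> cases b1 <;> cases b2 <;>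
    first
      | rfl
      | exact absurd rfl ha
      | exact absurd rfl hb
      | simp [enc3a, enc3b, enc2] at h

end Constructions18

/-- exact truth-functional rank theorems for non-permeable,
monotonic, regular and compact logics.  "The least cardinality is exactly n" is
rendered as: there is a truth-adequate mixed semantics over at most n truth
values, but none over at most n-1 truth values. -/
theorem statement_18 {A C : Type u} (ar : C → ℕ)
    (Cons : Set (Formula A C ar) → Set (Formula A C ar) → Prop)
    (hnp : ¬ Permeable Cons) (hmono : Monotonic Cons)
    (hreg : RegularRel Cons) (hcomp : CompactRel Cons) :
    ((HasTAMixedCard Cons 2 ∧ ¬ HasTAMixedCard Cons 1) ↔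
      (ReflRel Cons ∧ TransRel Cons)) ∧
    ((HasTAMixedCard Cons 3 ∧ ¬ HasTAMixedCard Cons 2) ↔
      ((ReflRel Cons ∨ TransRel Cons) ∧ ¬ (ReflRel Cons ∧ TransRel Cons))) ∧
    ((HasTAMixedCard Cons 4 ∧ ¬ HasTAMixedCard Cons 3) ↔
      (¬ ReflRel Cons ∧ ¬ TransRel Cons)) := by
  refine ⟨⟨fun h => H2_to_RT hnp h.1, fun h => ⟨H2_of_RT hmono hreg hcomp h.1 h.2, not_H1 hnp⟩⟩, ⟨?_, ?_⟩, ⟨?_, ?_⟩⟩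
  · rintro ⟨h3, nh2⟩
    constructor
    · by_contra hno
      push_neg at hno
      exact nR_nT_notH3 hnp hno.1 hno.2 h3
    · rintro ⟨hr, ht⟩
      exact nh2 (H2_of_RT hmono hreg hcomp hr ht)
  · rintro ⟨hor, hnand⟩
    refine ⟨?_, fun h2 => hnand (H2_to_RT hnp h2)⟩
    rcases hor with hr | ht
    · exact H3_of_R hmono hreg hcomp hr
    · exact H3_of_T hmono hreg hcomp ht
  · rintro ⟨h4, nh3⟩
    exact ⟨fun hr => nh3 (H3_of_R hmono hreg hcomp hr),
      fun ht => nh3 (H3_of_T hmono hreg hcomp ht)⟩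
  · rintro ⟨hnr, hnt⟩
    exact ⟨H4_always hmono hreg hcomp, nR_nT_notH3 hnp hnr hnt⟩
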